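/- Let J : T → U⊗U be a function such that each J(λ) is invertible and of zero weight, (ε⊗id)J(λ) = (id⊗ε)J(λ) = 1, and J satisfies the shifted twist equation (Δ⊗id)J(λ)·(J(λ+h⁽³⁾)⊗1) = (id⊗Δ)J(λ)·(1⊗J(λ−h⁽¹⁾)), where J(λ+h⁽³⁾)⊗1 = Σ_{μ∈T} J(λ+μ)⊗P_μ (J-part in factors 1,2, P_μ in factor 3) and 1⊗J(λ−h⁽¹⁾) = Σ_{μ∈T} P_μ⊗J(λ−μ) (P_μ in factor 1, J-part in factors 2,3). Then 𝒥(λ) := J(2λ+h⁽¹⁾+h⁽²⁾) := Σ_{μ,ν∈T} (P_μ⊗P_ν)·J(2λ+μ+ν) is a dynamical twist for U, i.e. each 𝒥(λ) is invertible and of zero weight, (ε⊗id)𝒥(λ) = (id⊗ε)𝒥(λ) = 1, and (Δ⊗id)𝒥(λ)·(𝒥(λ+h⁽³⁾)⊗1) = (id⊗Δ)𝒥(λ)·(1⊗𝒥(λ)). -/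

import Mathlib

open TensorProduct

noncomputable section

namespace WHA

variable (k B : Type*) [Field k] [Ring B] [Algebra k B]

/-- `x ↦ x ⊗ 1`, the embedding of `B ⊗ B` into legs 1,2 of `B ⊗ B ⊗ B`. -/
def leg12 : B ⊗[k] B →ₗ[k] B ⊗[k] (B ⊗[k] B) :=
  (TensorProduct.assoc k B B B).toLinearMap ∘ₗ (TensorProduct.mk k (B ⊗[k] B) B).flip 1

/-- `x ↦ 1 ⊗ x`, the embedding of `B ⊗ B` into legs 2,3 of `B ⊗ B ⊗ B`. -/
def leg23 : B ⊗[k] B →ₗ[k] B ⊗[k] (B ⊗[k] B) :=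
  TensorProduct.mk k B (B ⊗[k] B) 1

/-- `a ⊗ b ↦ a ⊗ 1 ⊗ b`, the embedding of `B ⊗ B` into legs 1,3 of `B ⊗ B ⊗ B`. -/
def leg13 : B ⊗[k] B →ₗ[k] B ⊗[k] (B ⊗[k] B) :=
  TensorProduct.map LinearMap.id (TensorProduct.mk k B B 1)

/-- `Δ ⊗ id`, landing in the right-associated triple tensor product. -/
def ext12 (Δ : B →ₗ[k] B ⊗[k] B) : B ⊗[k] B →ₗ[k] B ⊗[k] (B ⊗[k] B) :=
  (TensorProduct.assoc k B B B).toLinearMap ∘ₗ TensorProduct.map Δ LinearMap.id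

/-- `id ⊗ Δ`. -/
def ext23 (Δ : B →ₗ[k] B ⊗[k] B) : B ⊗[k] B →ₗ[k] B ⊗[k] (B ⊗[k] B) :=
  TensorProduct.map LinearMap.id Δ

/-- `(ε ⊗ id)` composed with the canonical isomorphism `k ⊗ B ≅ B`. -/
def epsL (ε : B →ₗ[k] k) : B ⊗[k] B →ₗ[k] B :=
  (TensorProduct.lid k B).toLinearMap ∘ₗ TensorProduct.map ε LinearMap.id

/-- `(id ⊗ ε)` composed with the canonical isomorphism `B ⊗ k ≅ B`. -/
def epsR (ε : B →ₗ[k] k) : B ⊗[k] B →ₗ[k] B :=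
  (TensorProduct.rid k B).toLinearMap ∘ₗ TensorProduct.map LinearMap.id ε

/-- Pairing of two linear functionals against an element of `B ⊗ B`. -/
def pairF (φ ψ : B →ₗ[k] k) : B ⊗[k] B →ₗ[k] k :=
  (TensorProduct.lid k k).toLinearMap ∘ₗ TensorProduct.map φ ψ

/-- The multiplication map `B ⊗ B → B`. -/
def mul2 : B ⊗[k] B →ₗ[k] B := LinearMap.mul' k B

end WHA

namespace DQG

variable (k : Type*) [Field k]
variable (T : Type*) [AddCommGroup T] [Fintype T] [DecidableEq T]
variable (U : Type*) [Ring U] [HopfAlgebra k U]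

/-- The matrix units `E_{λμ}`. -/
def E (l m : T) : Matrix T T k := Matrix.single l m 1

/-- The `(λ,μ)` matrix entry, as a linear functional. -/
def entry (l m : T) : Matrix T T k →ₗ[k] k where
  toFun A := A l m
  map_add' _ _ := rfl
  map_smul' _ _ := rfl

/-- The comultiplication of `End_k(A)`: `Δ(E_{λμ}) = E_{λμ} ⊗ E_{λμ}`. -/
def ΔM : Matrix T T k →ₗ[k] Matrix T T k ⊗[k] Matrix T T k :=
  ∑ l : T, ∑ m : T, (entry k T l m).smulRight (E k T l m ⊗ₜ[k] E k T l m)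

/-- The counit of `End_k(A)`: `ε(E_{λμ}) = 1`. -/
def εM : Matrix T T k →ₗ[k] k := ∑ l : T, ∑ m : T, entry k T l m

/-- The antipode of `End_k(A)`: `S(E_{λμ}) = E_{μλ}`. -/
def SM : Matrix T T k →ₗ[k] Matrix T T k :=
  ∑ l : T, ∑ m : T, (entry k T l m).smulRight (E k T m l)

/-- The comultiplication of the tensor product weak Hopf algebra `H = End_k(A) ⊗ U`. -/
def ΔH : (Matrix T T k ⊗[k] U) →ₗ[k] (Matrix T T k ⊗[k] U) ⊗[k] (Matrix T T k ⊗[k] U) :=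
  (TensorProduct.tensorTensorTensorComm k (Matrix T T k) (Matrix T T k) U U).toLinearMap ∘ₗ
    TensorProduct.map (ΔM k T) Coalgebra.comul

/-- The counit of `H = End_k(A) ⊗ U`. -/
def εH : (Matrix T T k ⊗[k] U) →ₗ[k] k :=
  (TensorProduct.lid k k).toLinearMap ∘ₗ TensorProduct.map (εM k T) Coalgebra.counit

/-- The antipode of `H = End_k(A) ⊗ U`. -/
def SH : (Matrix T T k ⊗[k] U) →ₗ[k] (Matrix T T k ⊗[k] U) :=
  TensorProduct.map (SM k T) (HopfAlgebra.antipode (R := k))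

set_option maxHeartbeats 1000000 in
/-- The canonical ring structure on the triple tensor power of `H = End_k(A) ⊗ U`
(made explicit to help instance resolution). -/
instance triRing : Ring ((Matrix T T k ⊗[k] U) ⊗[k] ((Matrix T T k ⊗[k] U) ⊗[k] (Matrix T T k ⊗[k] U))) := by
  exact Algebra.TensorProduct.instRing (R := k) (A := Matrix T T k ⊗[k] U)
    (B := (Matrix T T k ⊗[k] U) ⊗[k] (Matrix T T k ⊗[k] U))

variable (P : T → U)

/-- The hypotheses on the system of idempotents `{P_μ}` spanning the abelian Hopf
subalgebra `A ⊆ U`. -/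
structure IsPSystem : Prop where
  orth : ∀ m n : T, P m * P n = if m = n then P m else 0
  sum_one : ∑ m : T, P m = 1
  comul_P : ∀ m : T, Coalgebra.comul (R := k) (P m) = ∑ n : T, P n ⊗ₜ[k] P (m - n)
  counit_P : ∀ m : T, Coalgebra.counit (R := k) (P m) = if m = 0 then (1 : k) else 0
  antipode_P : ∀ m : T, HopfAlgebra.antipode (R := k) (P m) = P (-m)

/-- The element `Θ = Σ_{λμ} E_{λ,λ+μ} ⊗ E_{λλ}P_μ` of `H ⊗ H`. -/
def Θ : (Matrix T T k ⊗[k] U) ⊗[k] (Matrix T T k ⊗[k] U) :=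
  ∑ l : T, ∑ m : T, ((E k T l (l + m)) ⊗ₜ[k] (1 : U)) ⊗ₜ[k] ((E k T l l) ⊗ₜ[k] P m)

/-- The element `Θ̄ = Σ_{λμ} E_{λ+μ,λ} ⊗ E_{λλ}P_μ` of `H ⊗ H`. -/
def Θbar : (Matrix T T k ⊗[k] U) ⊗[k] (Matrix T T k ⊗[k] U) :=
  ∑ l : T, ∑ m : T, ((E k T (l + m) l) ⊗ₜ[k] (1 : U)) ⊗ₜ[k] ((E k T l l) ⊗ₜ[k] P m)

/-- `u ⊗ v ↦ (E_{λλ} ⊗ u) ⊗ (E_{λλ} ⊗ v)`. -/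
def embAt (l : T) : U ⊗[k] U →ₗ[k] (Matrix T T k ⊗[k] U) ⊗[k] (Matrix T T k ⊗[k] U) :=
  TensorProduct.map (TensorProduct.mk k (Matrix T T k) U (E k T l l))
    (TensorProduct.mk k (Matrix T T k) U (E k T l l))

/-- The embedding `J ↦ Ĵ = Σ_λ E_{λλ}J⁽¹⁾(λ) ⊗ E_{λλ}J⁽²⁾(λ)` of a
`U ⊗ U`-valued function on `T` into `H ⊗ H`. -/
def emb (J : T → U ⊗[k] U) : (Matrix T T k ⊗[k] U) ⊗[k] (Matrix T T k ⊗[k] U) := ∑ l : T, embAt k T U l (J l)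

/-- `x = a ⊗ b ↦ a ⊗ b ⊗ P_μ ∈ U ⊗ U ⊗ U`. -/
def withP (m : T) : U ⊗[k] U →ₗ[k] U ⊗[k] (U ⊗[k] U) :=
  TensorProduct.map LinearMap.id ((TensorProduct.mk k U U).flip (P m))

/-- `x ↦ P_μ ⊗ x ∈ U ⊗ U ⊗ U`. -/
def withPleft (m : T) : U ⊗[k] U →ₗ[k] U ⊗[k] (U ⊗[k] U) :=
  TensorProduct.mk k U (U ⊗[k] U) (P m)

/-- `J` is a dynamical twist for `U`, with pointwise inverse `Jbar`. -/
structure IsDynTwist (J Jbar : T → U ⊗[k] U) : Prop where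
  inv_right : ∀ l : T, J l * Jbar l = 1
  inv_left : ∀ l : T, Jbar l * J l = 1
  zero_weight : ∀ l m : T,
    J l * Coalgebra.comul (R := k) (P m) = Coalgebra.comul (R := k) (P m) * J l
  counit_left : ∀ l : T, WHA.epsL k U Coalgebra.counit (J l) = 1
  counit_right : ∀ l : T, WHA.epsR k U Coalgebra.counit (J l) = 1
  dyn : ∀ l : T,
    WHA.ext12 k U Coalgebra.comul (J l) * (∑ m : T, withP k T U P m (J (l + m)))
      = WHA.ext23 k U Coalgebra.comul (J l) * WHA.leg23 k U (J l)

end DQG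

section MulLemmas
variable {k : Type*} [Field k] {U : Type*} [Ring U] [HopfAlgebra k U]

def ext12A : U ⊗[k] U →ₐ[k] U ⊗[k] (U ⊗[k] U) :=
  (Algebra.TensorProduct.assoc k k k U U U).toAlgHom.comp
    (Algebra.TensorProduct.map (Bialgebra.comulAlgHom k U) (AlgHom.id k U))

lemma ext12_eq :
    WHA.ext12 k U (Coalgebra.comul) = (ext12A (k := k) (U := U)).toLinearMap := by
  apply TensorProduct.ext'
  intro a b
  simp [WHA.ext12, ext12A]
  rfl

lemma ext12_mul (x y : U ⊗[k] U) :
    WHA.ext12 k U (Coalgebra.comul) (x * y)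
      = WHA.ext12 k U (Coalgebra.comul) x * WHA.ext12 k U (Coalgebra.comul) y := by
  rw [ext12_eq]; simp only [AlgHom.toLinearMap_apply]; exact map_mul _ _ _

def ext23A : U ⊗[k] U →ₐ[k] U ⊗[k] (U ⊗[k] U) :=
  Algebra.TensorProduct.map (AlgHom.id k U) (Bialgebra.comulAlgHom k U)

lemma ext23_eq :
    WHA.ext23 k U (Coalgebra.comul) = (ext23A (k := k) (U := U)).toLinearMap := by
  apply TensorProduct.ext'
  intro a b
  simp [WHA.ext23, ext23A]

lemma ext23_mul (x y : U ⊗[k] U) :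
    WHA.ext23 k U (Coalgebra.comul) (x * y)
      = WHA.ext23 k U (Coalgebra.comul) x * WHA.ext23 k U (Coalgebra.comul) y := by
  rw [ext23_eq]; simp only [AlgHom.toLinearMap_apply]; exact map_mul _ _ _

def leg12A : U ⊗[k] U →ₐ[k] U ⊗[k] (U ⊗[k] U) :=
  (Algebra.TensorProduct.assoc k k k U U U).toAlgHom.comp
    (Algebra.TensorProduct.includeLeft)

lemma leg12_eq : WHA.leg12 k U = (leg12A (k := k) (U := U)).toLinearMap := by
  apply TensorProduct.ext'
  intro a b
  simp [WHA.leg12, leg12A]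

lemma leg12_mul (x y : U ⊗[k] U) :
    WHA.leg12 k U (x * y) = WHA.leg12 k U x * WHA.leg12 k U y := by
  rw [leg12_eq]; simp only [AlgHom.toLinearMap_apply]; exact map_mul _ _ _

lemma leg23_apply (x : U ⊗[k] U) : WHA.leg23 k U x = (1 : U) ⊗ₜ[k] x := rfl

lemma leg23_mul (x y : U ⊗[k] U) :
    WHA.leg23 k U (x * y) = WHA.leg23 k U x * WHA.leg23 k U y := by
  simp [leg23_apply, Algebra.TensorProduct.tmul_mul_tmul]

def epsLA : U ⊗[k] U →ₐ[k] U :=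
  (Algebra.TensorProduct.lid k U).toAlgHom.comp
    (Algebra.TensorProduct.map (Bialgebra.counitAlgHom k U) (AlgHom.id k U))

lemma epsL_eq :
    WHA.epsL k U (Coalgebra.counit) = (epsLA (k := k) (U := U)).toLinearMap := by
  apply TensorProduct.ext'
  intro a b
  simp [WHA.epsL, epsLA]

lemma epsL_mul (x y : U ⊗[k] U) :
    WHA.epsL k U (Coalgebra.counit) (x * y)
      = WHA.epsL k U (Coalgebra.counit) x * WHA.epsL k U (Coalgebra.counit) y := by
  rw [epsL_eq]; simp only [AlgHom.toLinearMap_apply]; exact map_mul _ _ _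

def epsRA : U ⊗[k] U →ₐ[k] U :=
  (Algebra.TensorProduct.rid k k U).toAlgHom.comp
    (Algebra.TensorProduct.map (AlgHom.id k U) (Bialgebra.counitAlgHom k U))

lemma epsR_eq :
    WHA.epsR k U (Coalgebra.counit) = (epsRA (k := k) (U := U)).toLinearMap := by
  apply TensorProduct.ext'
  intro a b
  simp [WHA.epsR, epsRA]

lemma epsR_mul (x y : U ⊗[k] U) :
    WHA.epsR k U (Coalgebra.counit) (x * y)
      = WHA.epsR k U (Coalgebra.counit) x * WHA.epsR k U (Coalgebra.counit) y := by
  rw [epsR_eq]; simp only [AlgHom.toLinearMap_apply]; exact map_mul _ _ _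

end MulLemmas
set_option maxHeartbeats 1000000
set_option synthInstance.maxHeartbeats 1000000
set_option linter.unusedSectionVars false

section PSys
variable {k : Type*} [Field k] {T : Type*} [AddCommGroup T] [Fintype T] [DecidableEq T]
  {U : Type*} [Ring U] [HopfAlgebra k U]

def D3 (P : T → U) (t : T) : U ⊗[k] (U ⊗[k] U) :=
  ∑ a : T, ∑ b : T, P a ⊗ₜ[k] (P b ⊗ₜ[k] P (t - a - b))

def P3 (P : T → U) (m : T) : U ⊗[k] (U ⊗[k] U) := (1:U) ⊗ₜ[k] ((1:U) ⊗ₜ[k] P m)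

def R3 (P : T → U) (m : T) : U ⊗[k] (U ⊗[k] U) := P m ⊗ₜ[k] (1 : U ⊗[k] U)

variable {P : T → U}

lemma D_mul (hP : DQG.IsPSystem k T U P) (s t : T) :
    (Coalgebra.comul (R := k) (P s)) * Coalgebra.comul (R := k) (P t)
      = if s = t then Coalgebra.comul (R := k) (P t) else 0 := by
  rw [← Bialgebra.comul_mul, hP.orth]
  split_ifs with h
  · subst h; rfl
  · exact map_zero _

lemma D_sum (hP : DQG.IsPSystem k T U P) :
    ∑ t : T, Coalgebra.comul (R := k) (P t) = 1 := by
  rw [← map_sum, hP.sum_one, Bialgebra.comul_one]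

lemma ext12_D (hP : DQG.IsPSystem k T U P) (t : T) :
    WHA.ext12 k U Coalgebra.comul (Coalgebra.comul (R := k) (P t)) = D3 P t := by
  rw [hP.comul_P, map_sum]
  have step : ∀ n : T, WHA.ext12 k U (Coalgebra.comul (R := k)) (P n ⊗ₜ[k] P (t - n))
      = ∑ b : T, P b ⊗ₜ[k] (P (n - b) ⊗ₜ[k] P (t - n)) := by
    intro n
    have h0 : WHA.ext12 k U (Coalgebra.comul (R := k)) (P n ⊗ₜ[k] P (t - n))
        = (TensorProduct.assoc k U U U) ((Coalgebra.comul (R := k) (P n)) ⊗ₜ[k] P (t - n)) := by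
      simp [WHA.ext12]
    rw [h0, hP.comul_P, TensorProduct.sum_tmul, map_sum]
    simp only [TensorProduct.assoc_tmul]
  simp only [step]
  rw [Finset.sum_comm]
  unfold D3
  refine Finset.sum_congr rfl fun a _ => ?_
  refine Fintype.sum_equiv (Equiv.subRight a) _ _ fun b => ?_
  simp only [Equiv.subRight_apply]
  have h2 : t - a - (b - a) = t - b := by abel
  rw [h2]

lemma ext23_D (hP : DQG.IsPSystem k T U P) (t : T) :
    WHA.ext23 k U Coalgebra.comul (Coalgebra.comul (R := k) (P t)) = D3 P t := by
  rw [hP.comul_P, map_sum]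
  unfold D3
  refine Finset.sum_congr rfl fun a _ => ?_
  have h0 : WHA.ext23 k U (Coalgebra.comul (R := k)) (P a ⊗ₜ[k] P (t - a))
      = P a ⊗ₜ[k] (Coalgebra.comul (R := k) (P (t - a))) := by
    simp [WHA.ext23]
  rw [h0, hP.comul_P, TensorProduct.tmul_sum]

lemma D3_mul (hP : DQG.IsPSystem k T U P) (s t : T) :
    D3 (k := k) P s * D3 P t = if s = t then D3 (k := k) P t else 0 := by
  rw [← ext12_D hP, ← ext12_D hP, ← ext12_mul, D_mul hP]
  split_ifs with h
  · rw [ext12_D hP]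
  · exact map_zero _

lemma withP_apply (m : T) (a b : U) :
    DQG.withP k T U P m (a ⊗ₜ[k] b) = a ⊗ₜ[k] (b ⊗ₜ[k] P m) := rfl

lemma withPleft_apply (m : T) (x : U ⊗[k] U) :
    DQG.withPleft k T U P m x = P m ⊗ₜ[k] x := rfl

lemma leg12_tmul (a b : U) :
    WHA.leg12 k U (a ⊗ₜ[k] b) = a ⊗ₜ[k] (b ⊗ₜ[k] (1:U)) := rfl

lemma withP_eq (m : T) (x : U ⊗[k] U) :
    DQG.withP k T U P m x = WHA.leg12 k U x * P3 P m := by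
  induction x using TensorProduct.induction_on with
  | zero => simp
  | tmul a b =>
      rw [withP_apply, leg12_tmul]
      unfold P3
      rw [Algebra.TensorProduct.tmul_mul_tmul, Algebra.TensorProduct.tmul_mul_tmul,
        mul_one, mul_one, one_mul]
  | add x y hx hy => rw [map_add, map_add, add_mul, hx, hy]

lemma P3_leg12 (m : T) (y : U ⊗[k] U) :
    P3 P m * WHA.leg12 k U y = WHA.leg12 k U y * P3 P m := by
  induction y using TensorProduct.induction_on with
  | zero => simp
  | tmul a b =>
      rw [leg12_tmul]
      unfold P3
      rw [Algebra.TensorProduct.tmul_mul_tmul, Algebra.TensorProduct.tmul_mul_tmul,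
        Algebra.TensorProduct.tmul_mul_tmul, Algebra.TensorProduct.tmul_mul_tmul]
      rw [mul_one, mul_one, one_mul, one_mul, mul_one, one_mul]
  | add x y hx hy => rw [map_add, add_mul, mul_add, hx, hy]

lemma withP_mul (m : T) (x y : U ⊗[k] U) :
    DQG.withP k T U P m (x * y) = DQG.withP k T U P m x * WHA.leg12 k U y := by
  rw [withP_eq, withP_eq, leg12_mul, mul_assoc, ← P3_leg12, ← mul_assoc]

lemma R3_leg23 (m : T) (x : U ⊗[k] U) :
    R3 P m * WHA.leg23 k U x = DQG.withPleft k T U P m x := by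
  rw [leg23_apply, withPleft_apply]
  unfold R3
  rw [Algebra.TensorProduct.tmul_mul_tmul, mul_one, one_mul]

lemma D3_P3 (hP : DQG.IsPSystem k T U P) (s m : T) :
    D3 (k := k) P (s + m) * P3 P m = DQG.withP k T U P m (Coalgebra.comul (R := k) (P s)) := by
  rw [hP.comul_P, map_sum]
  simp only [withP_apply]
  unfold D3 P3
  rw [Finset.sum_mul]
  refine Finset.sum_congr rfl fun a _ => ?_
  rw [Finset.sum_mul]
  rw [Finset.sum_eq_single_of_mem (s - a) (Finset.mem_univ _)]
  · rw [Algebra.TensorProduct.tmul_mul_tmul, Algebra.TensorProduct.tmul_mul_tmul,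
      mul_one, mul_one, hP.orth]
    have h1 : s + m - a - (s - a) = m := by abel
    rw [if_pos h1, h1]
  · intro b _ hb
    rw [Algebra.TensorProduct.tmul_mul_tmul, Algebra.TensorProduct.tmul_mul_tmul,
      mul_one, mul_one, hP.orth, if_neg, TensorProduct.tmul_zero, TensorProduct.tmul_zero]
    intro h
    apply hb
    have h4 : b - (s - a) = -(s + m - a - b - m) := by abel
    rw [sub_eq_zero_of_eq h, neg_zero] at h4
    exact sub_eq_zero.mp h4

lemma D3_Q3 (hP : DQG.IsPSystem k T U P) (t s : T) :
    D3 (k := k) P t * WHA.leg23 k U (Coalgebra.comul (R := k) (P s))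
      = ∑ b : T, P (t - s) ⊗ₜ[k] (P b ⊗ₜ[k] P (s - b)) := by
  rw [hP.comul_P, leg23_apply, TensorProduct.tmul_sum]
  unfold D3
  simp only [Finset.sum_mul, Finset.mul_sum, Algebra.TensorProduct.tmul_mul_tmul,
    one_mul, mul_one, hP.orth]
  refine Finset.sum_congr rfl fun n _ => ?_
  have hi : ∀ a : T,
      (∑ i : T, P a ⊗ₜ[k] ((if i = n then P i else 0) ⊗ₜ[k]
        (if t - a - i = s - n then P (t - a - i) else 0)))
      = P a ⊗ₜ[k] (P n ⊗ₜ[k] (if t - a - n = s - n then P (t - a - n) else 0)) := by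
    intro a
    rw [Finset.sum_eq_single_of_mem n (Finset.mem_univ _)]
    · rw [if_pos rfl]
    · intro i _ hiN
      rw [if_neg hiN, TensorProduct.zero_tmul, TensorProduct.tmul_zero]
  simp only [hi]
  rw [Finset.sum_eq_single_of_mem (t - s) (Finset.mem_univ _)]
  · have h1 : t - (t - s) - n = s - n := by abel
    rw [h1, if_pos rfl]
  · intro a _ ha
    rw [if_neg, TensorProduct.tmul_zero, TensorProduct.tmul_zero]
    intro h
    apply ha
    have h4 : a - (t - s) = -((t - a - n) - (s - n)) := by abel
    rw [sub_eq_zero_of_eq h, neg_zero] at h4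
    exact sub_eq_zero.mp h4

lemma D3_R3 (hP : DQG.IsPSystem k T U P) (t s : T) :
    D3 (k := k) P t * R3 P (t - s)
      = ∑ b : T, P (t - s) ⊗ₜ[k] (P b ⊗ₜ[k] P (s - b)) := by
  unfold D3 R3
  rw [Finset.sum_mul]
  rw [Finset.sum_eq_single_of_mem (t - s) (Finset.mem_univ _)]
  · rw [Finset.sum_mul]
    refine Finset.sum_congr rfl fun c _ => ?_
    rw [Algebra.TensorProduct.tmul_mul_tmul, mul_one, hP.orth, if_pos rfl]
    have h1 : t - (t - s) - c = s - c := by abel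
    rw [h1]
  · intro a _ ha
    rw [Finset.sum_mul]
    refine Finset.sum_eq_zero fun c _ => ?_
    rw [Algebra.TensorProduct.tmul_mul_tmul, mul_one, hP.orth, if_neg ha,
      TensorProduct.zero_tmul]

lemma epsL_tmul (a b : U) :
    WHA.epsL k U Coalgebra.counit (a ⊗ₜ[k] b) = Coalgebra.counit (R := k) a • b := by
  simp [WHA.epsL]

lemma epsR_tmul (a b : U) :
    WHA.epsR k U Coalgebra.counit (a ⊗ₜ[k] b) = Coalgebra.counit (R := k) b • a := by
  simp [WHA.epsR]

lemma epsL_D (hP : DQG.IsPSystem k T U P) (t : T) :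
    WHA.epsL k U Coalgebra.counit (Coalgebra.comul (R := k) (P t)) = P t := by
  rw [hP.comul_P, map_sum]
  simp only [epsL_tmul, hP.counit_P]
  rw [Finset.sum_eq_single_of_mem 0 (Finset.mem_univ _)]
  · rw [if_pos rfl, one_smul, sub_zero]
  · intro n _ hn
    rw [if_neg hn, zero_smul]

lemma epsR_D (hP : DQG.IsPSystem k T U P) (t : T) :
    WHA.epsR k U Coalgebra.counit (Coalgebra.comul (R := k) (P t)) = P t := by
  rw [hP.comul_P, map_sum]
  simp only [epsR_tmul, hP.counit_P]
  rw [Finset.sum_eq_single_of_mem t (Finset.mem_univ _)]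
  · rw [sub_self, if_pos rfl, one_smul]
  · intro n _ hn
    rw [if_neg, zero_smul]
    intro h
    exact hn (sub_eq_zero.mp h).symm

end PSys
set_option maxHeartbeats 1000000 in
set_option synthInstance.maxHeartbeats 200000 in
/-- if `J` satisfies the shifted twist equation
`(Δ⊗id)J(λ)(J(λ+h⁽³⁾)⊗1) = (id⊗Δ)J(λ)(1⊗J(λ−h⁽¹⁾))`, then
`𝒥(λ) = J(2λ+h⁽¹⁾+h⁽²⁾)` is a dynamical twist for `U`. -/
theorem shifted_twist_gives_dynamical_twist
    (k : Type*) [Field k]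
    (T : Type*) [AddCommGroup T] [Fintype T] [DecidableEq T]
    (U : Type*) [Ring U] [HopfAlgebra k U]
    (P : T → U) (hP : DQG.IsPSystem k T U P)
    (J Jbar : T → U ⊗[k] U)
    (hinv₁ : ∀ l : T, J l * Jbar l = 1) (hinv₂ : ∀ l : T, Jbar l * J l = 1)
    (hw : ∀ l m : T,
      J l * Coalgebra.comul (R := k) (P m) = Coalgebra.comul (R := k) (P m) * J l)
    (hεl : ∀ l : T, WHA.epsL k U Coalgebra.counit (J l) = 1)
    (hεr : ∀ l : T, WHA.epsR k U Coalgebra.counit (J l) = 1)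
    (hshift : ∀ l : T,
      WHA.ext12 k U Coalgebra.comul (J l) * (∑ m : T, DQG.withP k T U P m (J (l + m)))
        = WHA.ext23 k U Coalgebra.comul (J l) *
            (∑ m : T, DQG.withPleft k T U P m (J (l - m))))
    (Jcal : T → U ⊗[k] U)
    (hJcal : ∀ l : T,
      Jcal l = ∑ m : T, ∑ n : T, (P m ⊗ₜ[k] P n) * J (l + l + m + n)) :
    ∃ Jcalbar : T → U ⊗[k] U, DQG.IsDynTwist k T U P Jcal Jcalbar := by
  
  classical
  have hwb : ∀ (b m : T), Jbar b * Coalgebra.comul (R := k) (P m)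
      = Coalgebra.comul (R := k) (P m) * Jbar b := by
    intro b m
    calc Jbar b * Coalgebra.comul (R := k) (P m)
        = Jbar b * (Coalgebra.comul (R := k) (P m) * (J b * Jbar b)) := by
          rw [hinv₁ b, mul_one]
      _ = Jbar b * ((Coalgebra.comul (R := k) (P m) * J b) * Jbar b) := by
          simp only [mul_assoc]
      _ = Jbar b * ((J b * Coalgebra.comul (R := k) (P m)) * Jbar b) := by rw [hw b m]
      _ = (Jbar b * J b) * (Coalgebra.comul (R := k) (P m) * Jbar b) := by
          simp only [mul_assoc]
      _ = Coalgebra.comul (R := k) (P m) * Jbar b := by rw [hinv₂ b, one_mul]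
  have hJc : ∀ b : T, Jcal b = ∑ t : T, Coalgebra.comul (R := k) (P t) * J (b + b + t) := by
    intro b
    rw [hJcal b]
    calc (∑ m : T, ∑ n : T, (P m ⊗ₜ[k] P n) * J (b + b + m + n))
        = ∑ m : T, ∑ t : T, (P m ⊗ₜ[k] P (t - m)) * J (b + b + t) := by
          refine Finset.sum_congr rfl fun m _ => ?_
          refine Fintype.sum_equiv (Equiv.addLeft m) _ _ fun n => ?_
          simp only [Equiv.coe_addLeft]
          rw [add_sub_cancel_left]
          congr 1
          abel
      _ = ∑ t : T, ∑ m : T, (P m ⊗ₜ[k] P (t - m)) * J (b + b + t) := Finset.sum_comm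
      _ = ∑ t : T, Coalgebra.comul (R := k) (P t) * J (b + b + t) := by
          refine Finset.sum_congr rfl fun t _ => ?_
          rw [hP.comul_P, Finset.sum_mul]
  refine ⟨fun b => ∑ t : T, Coalgebra.comul (R := k) (P t) * Jbar (b + b + t),
    ?_, ?_, ?_, ?_, ?_, ?_⟩
  · -- inv_right
    intro b
    rw [hJc b, Finset.sum_mul_sum]
    have key : ∀ t s : T,
        (Coalgebra.comul (R := k) (P t) * J (b + b + t)) *
          (Coalgebra.comul (R := k) (P s) * Jbar (b + b + s))
        = (if t = s then Coalgebra.comul (R := k) (P s) else 0) *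
            (J (b + b + t) * Jbar (b + b + s)) := by
      intro t s
      calc (Coalgebra.comul (R := k) (P t) * J (b + b + t)) *
            (Coalgebra.comul (R := k) (P s) * Jbar (b + b + s))
          = Coalgebra.comul (R := k) (P t) *
              ((J (b + b + t) * Coalgebra.comul (R := k) (P s)) * Jbar (b + b + s)) := by
            simp only [mul_assoc]
        _ = Coalgebra.comul (R := k) (P t) *
              ((Coalgebra.comul (R := k) (P s) * J (b + b + t)) * Jbar (b + b + s)) := by
            rw [hw]
        _ = (Coalgebra.comul (R := k) (P t) * Coalgebra.comul (R := k) (P s)) *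
              (J (b + b + t) * Jbar (b + b + s)) := by simp only [mul_assoc]
        _ = _ := by rw [D_mul hP]
    simp only [key]
    have coll : ∀ t : T,
        (∑ s : T, (if t = s then Coalgebra.comul (R := k) (P s) else 0) *
          (J (b + b + t) * Jbar (b + b + s))) = Coalgebra.comul (R := k) (P t) := by
      intro t
      rw [Finset.sum_eq_single_of_mem t (Finset.mem_univ _)]
      · rw [if_pos rfl, hinv₁, mul_one]
      · intro s _ hs
        rw [if_neg (fun h => hs h.symm), zero_mul]
    simp only [coll]
    exact D_sum hP
  · -- inv_left
    intro b
    rw [hJc b, Finset.sum_mul_sum]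
    have key : ∀ t s : T,
        (Coalgebra.comul (R := k) (P t) * Jbar (b + b + t)) *
          (Coalgebra.comul (R := k) (P s) * J (b + b + s))
        = (if t = s then Coalgebra.comul (R := k) (P s) else 0) *
            (Jbar (b + b + t) * J (b + b + s)) := by
      intro t s
      calc (Coalgebra.comul (R := k) (P t) * Jbar (b + b + t)) *
            (Coalgebra.comul (R := k) (P s) * J (b + b + s))
          = Coalgebra.comul (R := k) (P t) *
              ((Jbar (b + b + t) * Coalgebra.comul (R := k) (P s)) * J (b + b + s)) := by
            simp only [mul_assoc]
        _ = Coalgebra.comul (R := k) (P t) *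
              ((Coalgebra.comul (R := k) (P s) * Jbar (b + b + t)) * J (b + b + s)) := by
            rw [hwb]
        _ = (Coalgebra.comul (R := k) (P t) * Coalgebra.comul (R := k) (P s)) *
              (Jbar (b + b + t) * J (b + b + s)) := by simp only [mul_assoc]
        _ = _ := by rw [D_mul hP]
    simp only [key]
    have coll : ∀ t : T,
        (∑ s : T, (if t = s then Coalgebra.comul (R := k) (P s) else 0) *
          (Jbar (b + b + t) * J (b + b + s))) = Coalgebra.comul (R := k) (P t) := by
      intro t
      rw [Finset.sum_eq_single_of_mem t (Finset.mem_univ _)]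
      · rw [if_pos rfl, hinv₂, mul_one]
      · intro s _ hs
        rw [if_neg (fun h => hs h.symm), zero_mul]
    simp only [coll]
    exact D_sum hP
  · -- zero_weight
    intro b m
    rw [hJc b, Finset.sum_mul, Finset.mul_sum]
    have key1 : ∀ t : T,
        (Coalgebra.comul (R := k) (P t) * J (b + b + t)) * Coalgebra.comul (R := k) (P m)
        = (if t = m then Coalgebra.comul (R := k) (P m) else 0) * J (b + b + t) := by
      intro t
      rw [mul_assoc, hw, ← mul_assoc, D_mul hP]
    have key2 : ∀ t : T,
        Coalgebra.comul (R := k) (P m) * (Coalgebra.comul (R := k) (P t) * J (b + b + t))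
        = (if m = t then Coalgebra.comul (R := k) (P t) else 0) * J (b + b + t) := by
      intro t
      rw [← mul_assoc, D_mul hP]
    simp only [key1, key2]
    have hL : (∑ t : T, (if t = m then Coalgebra.comul (R := k) (P m) else 0) * J (b + b + t))
        = Coalgebra.comul (R := k) (P m) * J (b + b + m) := by
      rw [Finset.sum_eq_single_of_mem m (Finset.mem_univ _)]
      · rw [if_pos rfl]
      · intro s _ hs
        rw [if_neg hs, zero_mul]
    have hR : (∑ t : T, (if m = t then Coalgebra.comul (R := k) (P t) else 0) * J (b + b + t))
        = Coalgebra.comul (R := k) (P m) * J (b + b + m) := by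
      rw [Finset.sum_eq_single_of_mem m (Finset.mem_univ _)]
      · rw [if_pos rfl]
      · intro s _ hs
        rw [if_neg (fun h => hs h.symm), zero_mul]
    rw [hL, hR]
  · -- counit_left
    intro b
    rw [hJc b, map_sum]
    have key : ∀ t : T,
        WHA.epsL k U Coalgebra.counit (Coalgebra.comul (R := k) (P t) * J (b + b + t))
        = P t := by
      intro t
      rw [epsL_mul, epsL_D hP, hεl, mul_one]
    rw [Finset.sum_congr rfl fun t _ => key t]
    exact hP.sum_one
  · -- counit_right
    intro b
    rw [hJc b, map_sum]
    have key : ∀ t : T,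
        WHA.epsR k U Coalgebra.counit (Coalgebra.comul (R := k) (P t) * J (b + b + t))
        = P t := by
      intro t
      rw [epsR_mul, epsR_D hP, hεr, mul_one]
    rw [Finset.sum_congr rfl fun t _ => key t]
    exact hP.sum_one
  · -- dyn
    intro b
    have hw12 : ∀ (c n : T),
        WHA.ext12 k U Coalgebra.comul (J c) * D3 P n
          = D3 P n * WHA.ext12 k U Coalgebra.comul (J c) := by
      intro c n
      have h := congrArg (WHA.ext12 k U (Coalgebra.comul (R := k))) (hw c n)
      rw [ext12_mul, ext12_mul, ext12_D hP] at h
      exact h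
    have hw23 : ∀ (c n : T),
        WHA.ext23 k U Coalgebra.comul (J c) * D3 P n
          = D3 P n * WHA.ext23 k U Coalgebra.comul (J c) := by
      intro c n
      have h := congrArg (WHA.ext23 k U (Coalgebra.comul (R := k))) (hw c n)
      rw [ext23_mul, ext23_mul, ext23_D hP] at h
      exact h
    have legP3 : ∀ (m : T) (y : U ⊗[k] U),
        P3 P m * WHA.leg12 k U y = DQG.withP k T U P m y := by
      intro m y
      rw [P3_leg12, ← withP_eq]
    have step1 : WHA.ext12 k U Coalgebra.comul (Jcal b)
        = ∑ t : T, D3 P t * WHA.ext12 k U Coalgebra.comul (J (b + b + t)) := by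
      rw [hJc b, map_sum]
      refine Finset.sum_congr rfl fun t _ => ?_
      rw [ext12_mul, ext12_D hP]
    have step1' : WHA.ext23 k U Coalgebra.comul (Jcal b)
        = ∑ t : T, D3 P t * WHA.ext23 k U Coalgebra.comul (J (b + b + t)) := by
      rw [hJc b, map_sum]
      refine Finset.sum_congr rfl fun t _ => ?_
      rw [ext23_mul, ext23_D hP]
    have step2 : (∑ m : T, DQG.withP k T U P m (Jcal (b + m)))
        = ∑ m : T, ∑ s : T,
            (D3 P (s + m) * P3 P m) * WHA.leg12 k U (J (b + b + (m + m) + s)) := by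
      refine Finset.sum_congr rfl fun m _ => ?_
      rw [hJc (b + m), map_sum]
      refine Finset.sum_congr rfl fun s _ => ?_
      rw [withP_mul, D3_P3 hP s m]
      have harg : b + m + (b + m) + s = b + b + (m + m) + s := by abel
      rw [harg]
    have step3 : WHA.leg23 k U (Jcal b)
        = ∑ s : T, WHA.leg23 k U (Coalgebra.comul (R := k) (P s)) *
            WHA.leg23 k U (J (b + b + s)) := by
      rw [hJc b, map_sum]
      exact Finset.sum_congr rfl fun s _ => leg23_mul _ _
    have keyL : ∀ t m s : T,
        (D3 P t * WHA.ext12 k U Coalgebra.comul (J (b + b + t))) *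
          ((D3 P (s + m) * P3 P m) * WHA.leg12 k U (J (b + b + (m + m) + s)))
        = (if t = s + m then D3 (k := k) P (s + m) else 0) *
            (WHA.ext12 k U Coalgebra.comul (J (b + b + t)) *
              (P3 P m * WHA.leg12 k U (J (b + b + (m + m) + s)))) := by
      intro t m s
      calc (D3 P t * WHA.ext12 k U Coalgebra.comul (J (b + b + t))) *
            ((D3 P (s + m) * P3 P m) * WHA.leg12 k U (J (b + b + (m + m) + s)))
          = D3 P t * ((WHA.ext12 k U Coalgebra.comul (J (b + b + t)) * D3 P (s + m)) *
              (P3 P m * WHA.leg12 k U (J (b + b + (m + m) + s)))) := by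
            simp only [mul_assoc]
        _ = D3 P t * ((D3 P (s + m) * WHA.ext12 k U Coalgebra.comul (J (b + b + t))) *
              (P3 P m * WHA.leg12 k U (J (b + b + (m + m) + s)))) := by
            rw [hw12]
        _ = (D3 P t * D3 P (s + m)) *
              (WHA.ext12 k U Coalgebra.comul (J (b + b + t)) *
                (P3 P m * WHA.leg12 k U (J (b + b + (m + m) + s)))) := by
            simp only [mul_assoc]
        _ = _ := by rw [D3_mul hP]
    have collL : ∀ t m : T,
        (∑ s : T, (if t = s + m then D3 (k := k) P (s + m) else 0) *
            (WHA.ext12 k U Coalgebra.comul (J (b + b + t)) *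
              (P3 P m * WHA.leg12 k U (J (b + b + (m + m) + s)))))
        = D3 P t * (WHA.ext12 k U Coalgebra.comul (J (b + b + t)) *
            DQG.withP k T U P m (J (b + b + t + m))) := by
      intro t m
      rw [Finset.sum_eq_single_of_mem (t - m) (Finset.mem_univ _)]
      · have h1 : t = t - m + m := by abel
        rw [if_pos h1, ← h1]
        have h2 : b + b + (m + m) + (t - m) = b + b + t + m := by abel
        rw [h2, legP3]
      · intro s _ hs
        rw [if_neg, zero_mul]
        intro h
        exact hs (eq_sub_of_add_eq h.symm)
    have keyR : ∀ t s : T,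
        (D3 P t * WHA.ext23 k U Coalgebra.comul (J (b + b + t))) *
          (WHA.leg23 k U (Coalgebra.comul (R := k) (P s)) * WHA.leg23 k U (J (b + b + s)))
        = D3 P t * (WHA.ext23 k U Coalgebra.comul (J (b + b + t)) *
            DQG.withPleft k T U P (t - s) (J (b + b + s))) := by
      intro t s
      calc (D3 P t * WHA.ext23 k U Coalgebra.comul (J (b + b + t))) *
            (WHA.leg23 k U (Coalgebra.comul (R := k) (P s)) * WHA.leg23 k U (J (b + b + s)))
          = (WHA.ext23 k U Coalgebra.comul (J (b + b + t)) * D3 P t) *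
              (WHA.leg23 k U (Coalgebra.comul (R := k) (P s)) *
                WHA.leg23 k U (J (b + b + s))) := by rw [← hw23]
        _ = WHA.ext23 k U Coalgebra.comul (J (b + b + t)) *
              ((D3 P t * WHA.leg23 k U (Coalgebra.comul (R := k) (P s))) *
                WHA.leg23 k U (J (b + b + s))) := by simp only [mul_assoc]
        _ = WHA.ext23 k U Coalgebra.comul (J (b + b + t)) *
              ((D3 P t * R3 P (t - s)) * WHA.leg23 k U (J (b + b + s))) := by
            rw [D3_Q3 hP, ← D3_R3 hP]
        _ = (WHA.ext23 k U Coalgebra.comul (J (b + b + t)) * D3 P t) *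
              (R3 P (t - s) * WHA.leg23 k U (J (b + b + s))) := by simp only [mul_assoc]
        _ = (D3 P t * WHA.ext23 k U Coalgebra.comul (J (b + b + t))) *
              DQG.withPleft k T U P (t - s) (J (b + b + s)) := by rw [hw23, R3_leg23]
        _ = _ := by rw [mul_assoc]
    have collR : ∀ t : T,
        (∑ s : T, D3 P t * (WHA.ext23 k U Coalgebra.comul (J (b + b + t)) *
            DQG.withPleft k T U P (t - s) (J (b + b + s))))
        = D3 P t * (WHA.ext23 k U Coalgebra.comul (J (b + b + t)) *
            (∑ m : T, DQG.withPleft k T U P m (J (b + b + t - m)))) := by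
      intro t
      rw [← Finset.mul_sum, ← Finset.mul_sum]
      have hre : (∑ s : T, DQG.withPleft k T U P (t - s) (J (b + b + s)))
          = ∑ m : T, DQG.withPleft k T U P m (J (b + b + t - m)) := by
        refine Fintype.sum_equiv (Equiv.subLeft t) _ _ fun s => ?_
        simp only [Equiv.subLeft_apply]
        have h2 : b + b + t - (t - s) = b + b + s := by abel
        rw [h2]
      rw [hre]
    rw [step1, step2, step1', step3, Finset.sum_mul_sum, Finset.sum_mul_sum]
    simp only [Finset.mul_sum]
    simp only [keyL]
    simp only [collL]
    simp only [keyR]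
    simp only [collR]
    simp only [← Finset.mul_sum]
    simp only [hshift]
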